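/- Let α be irrational. If λ ∈ ℝ satisfies λ·(ℤ + αℤ) ⊆ ℤ + αℤ and λ ∉ ℚ, then α is a quadratic irrational, i.e., satisfies a quadratic equation with integer coefficients. -/

import Mathlib

lemma mem_closure_pair (α x : ℝ)
    (hx : x ∈ (AddSubgroup.closure ({1, α} : Set ℝ) : AddSubgroup ℝ)) :
    ∃ m n : ℤ, x = (m : ℝ) + (n : ℝ) * α := by
  induction hx using AddSubgroup.closure_induction with
  | mem y hy =>
    rcases hy with rfl | rfl
    · exact ⟨1, 0, by norm_num⟩
    · exact ⟨0, 1, by norm_num⟩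
  | zero => exact ⟨0, 0, by norm_num⟩
  | add a b _ _ ha hb =>
    obtain ⟨m, n, rfl⟩ := ha
    obtain ⟨m', n', rfl⟩ := hb
    exact ⟨m + m', n + n', by push_cast; ring⟩
  | neg a _ ha =>
    obtain ⟨m, n, rfl⟩ := ha
    exact ⟨-m, -n, by push_cast; ring⟩

/-- If `λ·(ℤ + αℤ) ⊆ ℤ + αℤ` with `λ` irrational, then `α` is a quadratic irrational. -/
theorem quadratic_of_irrational_multiplier (α l : ℝ) (hα : Irrational α) (hl : Irrational l)
    (h : (fun x => l * x) '' ((AddSubgroup.closure ({1, α} : Set ℝ) : AddSubgroup ℝ) : Set ℝ)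
        ⊆ ((AddSubgroup.closure ({1, α} : Set ℝ) : AddSubgroup ℝ) : Set ℝ)) :
    ∃ a b c : ℤ, a ≠ 0 ∧ (a : ℝ) * α ^ 2 + (b : ℝ) * α + (c : ℝ) = 0 := by
  have h1 : (1 : ℝ) ∈ AddSubgroup.closure ({1, α} : Set ℝ) :=
    AddSubgroup.subset_closure (by simp)
  have hα' : α ∈ AddSubgroup.closure ({1, α} : Set ℝ) :=
    AddSubgroup.subset_closure (by simp)
  obtain ⟨p, q, hpq⟩ := mem_closure_pair α _ (h ⟨1, h1, rfl⟩)
  obtain ⟨r, s, hrs⟩ := mem_closure_pair α _ (h ⟨α, hα', rfl⟩)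
  simp only [mul_one] at hpq
  have hq : q ≠ 0 := by
    rintro rfl
    exact hl ⟨p, by simpa using hpq.symm⟩
  refine ⟨q, p - s, -r, hq, ?_⟩
  have : (p + q * α) * α = r + s * α := by rw [← hpq]; exact hrs
  push_cast
  nlinarith [this]
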